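/- arXiv:0905.1659 — 2 statements merged into one kernel-verified Lean document; each statement's English description precedes it below -/
import Mathlib

section
/- Let (X, 𝔅, μ) be a finite measure space and let f : X → ℂ be square-integrable with respect to μ. Let ν = μ·|f|² be the measure with density |f|² with respect to μ. Then there exists a complex linear isometry J from L²(ν) into L²(μ) such that for every bounded measurable function φ : X → ℂ, J sends the class of φ in L²(ν) to the class of φ·f in L²(μ); moreover the range of J is the closure in L²(μ) of the set of classes of products φ·f with φ bounded and measurable. -/
open scoped ENNReal NNReal

open MeasureTheory

section Aux

variable {X : Type*} [MeasurableSpace X] {μ : Measure X} {f : X → ℂ}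

private lemma stmt2_rpow2 (a : ℝ≥0∞) : a ^ (ENNReal.toReal 2) = a ^ (2 : ℕ) := by
  rw [show ((2 : ℝ≥0∞).toReal) = ((2 : ℕ) : ℝ) by norm_num, ENNReal.rpow_natCast]

private lemma stmt2_aux_ae (hf : AEStronglyMeasurable f μ) {u v : X → ℂ}
    (h : u =ᵐ[μ.withDensity fun x => (‖f x‖₊ : ℝ≥0∞) ^ 2] v) :
    (fun x => u x * f x) =ᵐ[μ] fun x => v x * f x := by
  have hd : AEMeasurable (fun x => (‖f x‖₊ : ℝ≥0∞) ^ 2) μ := hf.enorm.pow_const 2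
  rw [Filter.EventuallyEq, ae_withDensity_iff' hd] at h
  filter_upwards [h] with x hx
  by_cases hfx : ((‖f x‖₊ : ℝ≥0∞)) ^ 2 = 0
  · have : f x = 0 := by simpa using hfx
    simp [this]
  · rw [hx hfx]

private lemma stmt2_aux_eLp (hf : AEStronglyMeasurable f μ) {u : X → ℂ}
    (hu : AEMeasurable u (μ.withDensity fun x => (‖f x‖₊ : ℝ≥0∞) ^ 2)) :
    eLpNorm (fun x => u x * f x) 2 μ
      = eLpNorm u 2 (μ.withDensity fun x => (‖f x‖₊ : ℝ≥0∞) ^ 2) := by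
  have hd : AEMeasurable (fun x => (‖f x‖₊ : ℝ≥0∞) ^ 2) μ := hf.enorm.pow_const 2
  rw [eLpNorm_eq_lintegral_rpow_enorm_toReal (by norm_num) (by norm_num),
    eLpNorm_eq_lintegral_rpow_enorm_toReal (by norm_num) (by norm_num)]
  congr 1
  have hu2 : AEMeasurable (fun x => (‖u x‖ₑ) ^ (ENNReal.toReal 2))
      (μ.withDensity fun x => (‖f x‖₊ : ℝ≥0∞) ^ 2) :=
    (hu.enorm.pow_const 2).congr (by
      filter_upwards with x
      rw [stmt2_rpow2])
  rw [lintegral_withDensity_eq_lintegral_mul₀' hd hu2]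
  apply lintegral_congr_ae
  filter_upwards with x
  simp only [Pi.mul_apply, enorm_mul]
  rw [ENNReal.mul_rpow_of_nonneg _ _ (by norm_num), mul_comm, stmt2_rpow2, stmt2_rpow2]
  rfl

private lemma stmt2_aux_mem (hf : AEStronglyMeasurable f μ)
    (g : Lp ℂ 2 (μ.withDensity fun x => (‖f x‖₊ : ℝ≥0∞) ^ 2)) :
    MemLp (fun x => (g : X → ℂ) x * f x) 2 μ := by
  have hg := Lp.aestronglyMeasurable g
  have h1 : (fun x => (g : X → ℂ) x * f x) =ᵐ[μ] fun x => hg.mk g x * f x :=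
    stmt2_aux_ae hf hg.ae_eq_mk
  refine ⟨(hg.stronglyMeasurable_mk.aestronglyMeasurable.mul hf).congr h1.symm, ?_⟩
  rw [stmt2_aux_eLp hf hg.aemeasurable]
  exact Lp.eLpNorm_lt_top g

end Aux

/-- Let `(X, 𝔅, μ)` be a finite measure space and `f ∈ L²(μ)`, and let
`ν = μ·|f|²`. Then there is a complex linear isometry `J : L²(ν) → L²(μ)` sending the class
of any bounded measurable `φ` to the class of `φ·f`, whose range is the closure of the set
of classes of such products `φ·f`. -/
theorem stmt2 {X : Type*} [MeasurableSpace X] (μ : Measure X) [IsFiniteMeasure μ]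
    (f : X → ℂ) (hf : MemLp f 2 μ) :
    ∃ J : Lp ℂ 2 (μ.withDensity fun x => (‖f x‖₊ : ℝ≥0∞) ^ 2) →ₗᵢ[ℂ] Lp ℂ 2 μ,
      (∀ (φ : X → ℂ), Measurable φ → (∃ C : ℝ, ∀ x, ‖φ x‖ ≤ C) →
        ∀ (h₁ : MemLp φ 2 (μ.withDensity fun x => (‖f x‖₊ : ℝ≥0∞) ^ 2))
          (h₂ : MemLp (fun x => φ x * f x) 2 μ),
          J (h₁.toLp φ) = h₂.toLp fun x => φ x * f x) ∧
      Set.range J = closure {g : Lp ℂ 2 μ |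
        ∃ (φ : X → ℂ) (_ : Measurable φ) (_ : ∃ C : ℝ, ∀ x, ‖φ x‖ ≤ C)
          (h₂ : MemLp (fun x => φ x * f x) 2 μ),
          g = h₂.toLp fun x => φ x * f x} := by
  set ν := μ.withDensity fun x => (‖f x‖₊ : ℝ≥0∞) ^ 2 with hν
  haveI : IsFiniteMeasure ν := by
    refine isFiniteMeasure_withDensity ?_
    have := lintegral_rpow_enorm_lt_top_of_eLpNorm_lt_top (f := f)
      (by norm_num) (by norm_num) hf.2
    refine ne_of_lt ?_
    have heq : (fun a => (‖f a‖₊ : ℝ≥0∞) ^ 2)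
        = fun a => (‖f a‖₊ : ℝ≥0∞) ^ ENNReal.toReal 2 :=
      funext fun a => (stmt2_rpow2 _).symm
    rw [heq]; exact this
  -- the underlying map
  let T : Lp ℂ 2 ν → Lp ℂ 2 μ := fun g => (stmt2_aux_mem hf.1 g).toLp _
  have hT_ae : ∀ g : Lp ℂ 2 ν, (T g : X → ℂ) =ᵐ[μ] fun x => (g : X → ℂ) x * f x :=
    fun g => (stmt2_aux_mem hf.1 g).coeFn_toLp
  have hT_add : ∀ g h : Lp ℂ 2 ν, T (g + h) = T g + T h := by
    intro g h
    apply Lp.ext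
    have h1 : ((g + h : Lp ℂ 2 ν) : X → ℂ) =ᵐ[ν] (g : X → ℂ) + h := Lp.coeFn_add g h
    filter_upwards [hT_ae (g + h), (Lp.coeFn_add (T g) (T h)), hT_ae g, hT_ae h,
      stmt2_aux_ae hf.1 h1] with x e1 e2 e3 e4 e5
    rw [e1, e2, e5]
    simp [e3, e4, add_mul]
  have hT_smul : ∀ (c : ℂ) (g : Lp ℂ 2 ν), T (c • g) = c • T g := by
    intro c g
    apply Lp.ext
    have h1 : ((c • g : Lp ℂ 2 ν) : X → ℂ) =ᵐ[ν] c • (g : X → ℂ) := Lp.coeFn_smul c g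
    filter_upwards [hT_ae (c • g), (Lp.coeFn_smul c (T g)), hT_ae g,
      stmt2_aux_ae hf.1 h1] with x e1 e2 e3 e4
    rw [e1, e2, e4]
    simp [e3, mul_assoc]
  have hT_norm : ∀ g : Lp ℂ 2 ν, ‖T g‖ = ‖g‖ := by
    intro g
    rw [show T g = (stmt2_aux_mem hf.1 g).toLp _ from rfl, Lp.norm_toLp,
      stmt2_aux_eLp hf.1 (Lp.aestronglyMeasurable g).aemeasurable, Lp.norm_def]
  let J : Lp ℂ 2 ν →ₗᵢ[ℂ] Lp ℂ 2 μ :=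
    { toFun := T, map_add' := hT_add, map_smul' := hT_smul, norm_map' := hT_norm }
  have hJprop : ∀ (φ : X → ℂ), Measurable φ → (∃ C : ℝ, ∀ x, ‖φ x‖ ≤ C) →
      ∀ (h₁ : MemLp φ 2 ν) (h₂ : MemLp (fun x => φ x * f x) 2 μ),
        J (h₁.toLp φ) = h₂.toLp fun x => φ x * f x := by
    intro φ _ _ h₁ h₂
    exact MemLp.toLp_congr (stmt2_aux_mem hf.1 (h₁.toLp φ)) h₂ (stmt2_aux_ae hf.1 h₁.coeFn_toLp)
  refine ⟨J, hJprop, ?_⟩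
  have hclosed : IsClosed (Set.range J) := J.isometry.isClosedEmbedding.isClosed_range
  apply subset_antisymm
  · -- range J ⊆ closure S
    rintro _ ⟨g, rfl⟩
    have hg : g ∈ closure (Set.range ((↑) : Lp.simpleFunc ℂ 2 ν → Lp ℂ 2 ν)) :=
      (Lp.simpleFunc.denseRange (by norm_num)) g
    have h2 : J g ∈ closure (J '' Set.range ((↑) : Lp.simpleFunc ℂ 2 ν → Lp ℂ 2 ν)) :=
      (image_closure_subset_closure_image J.continuous) ⟨g, hg, rfl⟩
    refine closure_mono ?_ h2
    rintro _ ⟨_, ⟨s, rfl⟩, rfl⟩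
    set ψ := Lp.simpleFunc.toSimpleFunc s with hψ
    obtain ⟨C, hC⟩ := ψ.exists_forall_norm_le
    have h₁ : MemLp (⇑ψ) 2 ν := Lp.simpleFunc.memLp s
    have hae : ((s : Lp ℂ 2 ν) : X → ℂ) =ᵐ[ν] ⇑ψ :=
      (Lp.simpleFunc.toSimpleFunc_eq_toFun s).symm
    have hcoe : (s : Lp ℂ 2 ν) = h₁.toLp ψ := Lp.ext (hae.trans h₁.coeFn_toLp.symm)
    have h₂ : MemLp (fun x => ψ x * f x) 2 μ :=
      (stmt2_aux_mem hf.1 (s : Lp ℂ 2 ν)).ae_eq (stmt2_aux_ae hf.1 hae)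
    exact ⟨ψ, ψ.measurable, ⟨C, hC⟩, h₂, by rw [hcoe]; exact hJprop ψ ψ.measurable ⟨C, hC⟩ h₁ h₂⟩
  · -- closure S ⊆ range J
    refine closure_minimal ?_ hclosed
    rintro g ⟨φ, hφm, ⟨C, hC⟩, h₂, rfl⟩
    have h₁ : MemLp φ 2 ν :=
      MemLp.of_bound hφm.aestronglyMeasurable C (Filter.Eventually.of_forall hC)
    exact ⟨h₁.toLp φ, hJprop φ hφm ⟨C, hC⟩ h₁ h₂⟩
end

section
/- Let (X, 𝔅, μ) be a finite measure space, let f₁, …, fₙ : X → ℂ be square-integrable with respect to μ, and set g(x) = Σᵢ₌₁ⁿ |fᵢ(x)|². Let ν = μ·g be the measure with density g with respect to μ. Then there exists a complex linear isometry J from L²(ν) into the ℓ²-direct sum L²(μ)ⁿ = L²(μ) ⊕ ⋯ ⊕ L²(μ) such that for every bounded measurable function φ : X → ℂ, J sends the class of φ in L²(ν) to the n-tuple (φ·f₁, …, φ·fₙ). -/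
open scoped ENNReal NNReal

open MeasureTheory

/-- Let `(X, 𝔅, μ)` be a finite measure space, `f₁, …, fₙ ∈ L²(μ)`, and
`g = ∑ |fᵢ|²`, `ν = μ·g`. Then there is a complex linear isometry `J : L²(ν) → L²(μ)ⁿ`
(the `ℓ²`-direct sum) sending the class of any bounded measurable `φ` to `(φ·f₁, …, φ·fₙ)`. -/
theorem stmt3 {X : Type*} [MeasurableSpace X] (μ : Measure X) [IsFiniteMeasure μ]
    (n : ℕ) (f : Fin n → X → ℂ) (hf : ∀ i, MemLp (f i) 2 μ) :
    ∃ J : Lp ℂ 2 (μ.withDensity fun x => ∑ i, (‖f i x‖₊ : ℝ≥0∞) ^ 2) →ₗᵢ[ℂ]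
        PiLp 2 (fun _ : Fin n => Lp ℂ 2 μ),
      ∀ (φ : X → ℂ), Measurable φ → (∃ C : ℝ, ∀ x, ‖φ x‖ ≤ C) →
        ∀ (h₁ : MemLp φ 2 (μ.withDensity fun x => ∑ i, (‖f i x‖₊ : ℝ≥0∞) ^ 2))
          (h₂ : ∀ i, MemLp (fun x => φ x * f i x) 2 μ),
          J (h₁.toLp φ) = WithLp.toLp 2 (fun i => (h₂ i).toLp fun x => φ x * f i x) := by
  set g : X → ℝ≥0∞ := fun x => ∑ i, (‖f i x‖₊ : ℝ≥0∞) ^ 2 with hg_def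
  set ν : Measure X := μ.withDensity g with hν_def
  have hg_meas : AEMeasurable g μ :=
    Finset.aemeasurable_fun_sum _ fun i _ => (hf i).aestronglyMeasurable.enorm.pow_const 2
  -- pointwise: g x = 0 → f i x = 0
  have hzero : ∀ (x : X) (i : Fin n), g x = 0 → f i x = 0 := by
    intro x i hx
    have h0 : (‖f i x‖₊ : ℝ≥0∞) ^ 2 = 0 :=
      (Finset.sum_eq_zero_iff.mp hx) i (Finset.mem_univ i)
    simpa using h0
  -- Key: ν-a.e. equality gives μ-a.e. equality of products with f i
  have keyA : ∀ (a b : X → ℂ), a =ᵐ[ν] b → ∀ i,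
      (fun x => a x * f i x) =ᵐ[μ] fun x => b x * f i x := by
    intro a b hab i
    have h' : ∀ᵐ x ∂μ, g x ≠ 0 → a x = b x := (ae_withDensity_iff' hg_meas).mp hab
    filter_upwards [h'] with x hx
    by_cases hgx : g x = 0
    · simp [hzero x i hgx]
    · simp [hx hgx]
  -- measurability of products
  have hmul_aesm : ∀ (h : X → ℂ), AEStronglyMeasurable h ν → ∀ i,
      AEStronglyMeasurable (fun x => h x * f i x) μ := by
    intro h hh i
    have h1 : AEStronglyMeasurable (fun x => hh.mk h x * f i x) μ :=
      hh.stronglyMeasurable_mk.aestronglyMeasurable.mul (hf i).aestronglyMeasurable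
    exact h1.congr (keyA _ _ hh.ae_eq_mk.symm i)
  -- the lintegral identity
  have keyI : ∀ (h : X → ℂ), AEStronglyMeasurable h ν →
      ∫⁻ x, (‖h x‖₊ : ℝ≥0∞) ^ 2 ∂ν = ∑ i, ∫⁻ x, (‖h x * f i x‖₊ : ℝ≥0∞) ^ 2 ∂μ := by
    intro h hh
    have hae : AEMeasurable (fun x => (‖h x‖₊ : ℝ≥0∞) ^ 2) ν := hh.enorm.pow_const 2
    rw [hν_def, lintegral_withDensity_eq_lintegral_mul₀' hg_meas hae]
    have hpt : ∀ x, (g * fun x => (‖h x‖₊ : ℝ≥0∞) ^ 2) x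
        = ∑ i, (‖h x * f i x‖₊ : ℝ≥0∞) ^ 2 := by
      intro x
      simp only [Pi.mul_apply, hg_def, Finset.sum_mul, nnnorm_mul, ENNReal.coe_mul, mul_pow]
      exact Finset.sum_congr rfl fun i _ => by ring
    rw [lintegral_congr hpt]
    exact lintegral_finset_sum' _ fun i _ =>
      ((hmul_aesm h hh i).enorm.pow_const 2)
  have htR : (2 : ℝ≥0∞).toReal = (2 : ℝ) := by simp
  -- translate MemLp to finiteness of the square lintegral
  have hlt_iff : ∀ (m : Measure X) (h : X → ℂ), eLpNorm h 2 m < ⊤ ↔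
      ∫⁻ x, (‖h x‖₊ : ℝ≥0∞) ^ 2 ∂m < ⊤ := by
    intro m h
    rw [eLpNorm_lt_top_iff_lintegral_rpow_enorm_lt_top two_ne_zero ENNReal.ofNat_ne_top, htR]
    simp_rw [ENNReal.rpow_two]
    rfl
  -- membership of products in L²(μ)
  have hmem : ∀ (h : X → ℂ), MemLp h 2 ν → ∀ i, MemLp (fun x => h x * f i x) 2 μ := by
    intro h hh i
    refine ⟨hmul_aesm h hh.1 i, ?_⟩
    rw [hlt_iff]
    calc ∫⁻ x, (‖h x * f i x‖₊ : ℝ≥0∞) ^ 2 ∂μ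
        ≤ ∑ j, ∫⁻ x, (‖h x * f j x‖₊ : ℝ≥0∞) ^ 2 ∂μ :=
          Finset.single_le_sum (f := fun j => ∫⁻ x, (‖h x * f j x‖₊ : ℝ≥0∞) ^ 2 ∂μ)
            (fun j _ => zero_le) (Finset.mem_univ i)
      _ = ∫⁻ x, (‖h x‖₊ : ℝ≥0∞) ^ 2 ∂ν := (keyI h hh.1).symm
      _ < ⊤ := (hlt_iff ν h).mp hh.2
  have hL2 : ∀ h : Lp ℂ 2 ν, ∀ i, MemLp (fun x => (h : X → ℂ) x * f i x) 2 μ :=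
    fun h i => hmem _ (Lp.memLp h) i
  -- the underlying map
  set J₀ : Lp ℂ 2 ν → PiLp 2 (fun _ : Fin n => Lp ℂ 2 μ) :=
    fun h => WithLp.toLp 2 (fun i => ((hL2 h i).toLp _)) with hJ₀
  have J_comp : ∀ (h : Lp ℂ 2 ν) (a : X → ℂ) (ha : MemLp a 2 ν), (h : X → ℂ) =ᵐ[ν] a →
      ∀ i, J₀ h i = (hmem a ha i).toLp _ := by
    intro h a ha hcong i
    exact MemLp.toLp_congr (hL2 h i) _ (keyA _ _ hcong i)
  have J_add : ∀ a b : Lp ℂ 2 ν, J₀ (a + b) = J₀ a + J₀ b := by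
    intro a b
    ext i : 1
    have e1 : (fun x => ((a + b : Lp ℂ 2 ν) : X → ℂ) x * f i x)
        =ᵐ[μ] fun x => (a : X → ℂ) x * f i x + (b : X → ℂ) x * f i x := by
      filter_upwards [keyA _ _ (Lp.coeFn_add a b) i] with x hx
      simp only [hx, Pi.add_apply]; ring
    calc J₀ (a + b) i = ((hL2 a i).add (hL2 b i)).toLp _ := MemLp.toLp_congr (hL2 (a + b) i) _ e1
      _ = (hL2 a i).toLp _ + (hL2 b i).toLp _ := MemLp.toLp_add _ _
  have J_smul : ∀ (c : ℂ) (a : Lp ℂ 2 ν), J₀ (c • a) = c • J₀ a := by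
    intro c a
    ext i : 1
    have e1 : (fun x => ((c • a : Lp ℂ 2 ν) : X → ℂ) x * f i x)
        =ᵐ[μ] c • fun x => (a : X → ℂ) x * f i x := by
      filter_upwards [keyA _ _ (Lp.coeFn_smul c a) i] with x hx
      rw [hx]; simp [Pi.smul_apply, smul_eq_mul]; ring
    calc J₀ (c • a) i = ((hL2 a i).const_smul c).toLp _ := MemLp.toLp_congr (hL2 (c • a) i) _ e1
      _ = c • (hL2 a i).toLp _ := MemLp.toLp_const_smul _ _
  have J_norm : ∀ h : Lp ℂ 2 ν, ‖J₀ h‖ = ‖h‖ := by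
    intro h
    set A : Fin n → ℝ≥0∞ := fun i => ∫⁻ x, (‖(h : X → ℂ) x * f i x‖₊ : ℝ≥0∞) ^ 2 ∂μ with hA
    set B : ℝ≥0∞ := ∫⁻ x, (‖(h : X → ℂ) x‖₊ : ℝ≥0∞) ^ 2 ∂ν with hB
    have hBA : B = ∑ i, A i := keyI _ (Lp.memLp h).1
    have hAfin : ∀ i, A i ≠ ⊤ := fun i => ((hlt_iff μ _).mp (hmem _ (Lp.memLp h) i).2).ne
    have hBfin : B ≠ ⊤ := ((hlt_iff ν _).mp (Lp.memLp h).2).ne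
    have hsnorm : ∀ (m : Measure X) (a : X → ℂ),
        eLpNorm a 2 m = (∫⁻ x, (‖a x‖₊ : ℝ≥0∞) ^ 2 ∂m) ^ (1/2 : ℝ) := by
      intro m a
      rw [eLpNorm_eq_lintegral_rpow_enorm_toReal two_ne_zero ENNReal.ofNat_ne_top, htR]
      simp_rw [ENNReal.rpow_two]
      rfl
    have hnormi : ∀ i, ‖J₀ h i‖ = ((A i) ^ (1/2 : ℝ)).toReal := by
      intro i
      rw [hJ₀]
      rw [Lp.norm_toLp, hsnorm]
    have hnr : ‖h‖ = (B ^ (1/2 : ℝ)).toReal := by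
      rw [Lp.norm_def, hsnorm]
    rw [PiLp.norm_eq_sum (by rw [htR]; norm_num), htR, hnr]
    have : ∀ i : Fin n, ‖J₀ h i‖ ^ (2:ℝ) = (A i).toReal := by
      intro i
      rw [hnormi i, ENNReal.toReal_rpow, ← ENNReal.rpow_mul]
      norm_num
    simp_rw [this]
    rw [← ENNReal.toReal_sum (fun i _ => hAfin i), ← hBA, ← ENNReal.toReal_rpow]
  refine ⟨⟨⟨⟨J₀, J_add⟩, J_smul⟩, J_norm⟩, ?_⟩
  intro φ hφm hφb h₁ h₂
  ext i : 1
  exact J_comp (h₁.toLp φ) φ h₁ (h₁.coeFn_toLp) i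
end
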